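/- Let c_n be defined by c_n = γ_{n,0}, where γ satisfies γ_{0,p} = p+1, γ_{1,p} = p^2+p+1, and γ_{n+1,p} = Σ_{i=0}^{n} γ_{i,p} γ_{n-i,p+i} for n ≥ 1. Then c_n satisfies n! ≤ c_n ≤ Catalan(n) * n! for all n ≥ 1, where Catalan(n) = (1/(n+1)) * binomial(2n, n). -/

import Mathlib

open Finset

private lemma asc_add (a i : ℕ) : ∀ j, a.ascFactorial (i + j) =
    a.ascFactorial i * (a + i).ascFactorial j
  | 0 => by simp
  | j + 1 => by
    rw [← Nat.add_assoc, Nat.ascFactorial_succ, Nat.ascFactorial_succ, asc_add a i j]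
    ring

private lemma catalan_sum (n : ℕ) :
    ∑ i ∈ range (n + 1), catalan i * catalan (n - i) = catalan (n + 1) := by
  rw [catalan_succ, ← Finset.sum_range fun i => catalan i * catalan (n - i)]

theorem stmt_1 (γ : ℕ → ℕ → ℕ)
    (h0 : ∀ p, γ 0 p = p + 1)
    (h1 : ∀ p, γ 1 p = p ^ 2 + p + 1)
    (hrec : ∀ n p, 1 ≤ n →
      γ (n + 1) p = ∑ i ∈ Finset.range (n + 1), γ i p * γ (n - i) (p + i)) :
    ∀ n : ℕ, 1 ≤ n →
      n.factorial ≤ γ n 0 ∧ γ n 0 ≤ catalan n * n.factorial := by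
  have key : ∀ n p, (p + 1).ascFactorial n ≤ γ n p ∧
      γ n p ≤ catalan n * ((p + 1) * (p + 1).ascFactorial n) := by
    intro n
    induction n using Nat.strong_induction_on with
    | _ n ih =>
      match n with
      | 0 => intro p; simp [h0, Nat.ascFactorial_zero]
      | 1 =>
        intro p
        simp only [h1, catalan_one]
        have : (p + 1).ascFactorial 1 = p + 1 := by
          rw [Nat.ascFactorial_succ, Nat.ascFactorial_zero]; ring
        rw [this]
        constructor <;> nlinarith
      | m + 2 =>
        intro p
        rw [hrec (m + 1) p (by omega)]
        constructor
        · -- lower bound: use term i = m+1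
          calc (p + 1).ascFactorial (m + 2)
              = (p + 1).ascFactorial ((m + 1) + 1) := by ring_nf
            _ = (p + 1 + (m + 1)) * (p + 1).ascFactorial (m + 1) := Nat.ascFactorial_succ
            _ ≤ γ (m + 1) p * γ ((m + 1) - (m + 1)) (p + (m + 1)) := by
                rw [Nat.sub_self, h0]
                calc (p + 1 + (m + 1)) * (p + 1).ascFactorial (m + 1)
                    ≤ (p + 1 + (m + 1)) * γ (m + 1) p :=
                      Nat.mul_le_mul_left _ (ih (m + 1) (by omega) p).1
                  _ = γ (m + 1) p * (p + (m + 1) + 1) := by ring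
            _ ≤ ∑ i ∈ range (m + 2), γ i p * γ ((m + 1) - i) (p + i) := by
                apply Finset.single_le_sum (f := fun i => γ i p * γ ((m + 1) - i) (p + i))
                · intro i _; exact Nat.zero_le _
                · exact Finset.self_mem_range_succ (m + 1)
        · -- upper bound
          calc ∑ i ∈ range (m + 2), γ i p * γ ((m + 1) - i) (p + i)
              ≤ ∑ i ∈ range (m + 2), catalan i * catalan ((m + 1) - i) *
                  ((p + 1) * (p + m + 2) * (p + 1).ascFactorial (m + 1)) := by
                apply Finset.sum_le_sum
                intro i hi
                have hi' : i ≤ m + 1 := by simp at hi; omega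
                have u1 := (ih i (by omega) p).2
                have u2 := (ih ((m + 1) - i) (by omega) (p + i)).2
                calc γ i p * γ ((m + 1) - i) (p + i)
                    ≤ (catalan i * ((p + 1) * (p + 1).ascFactorial i)) *
                      (catalan ((m + 1) - i) * ((p + i + 1) * (p + i + 1).ascFactorial ((m + 1) - i))) :=
                      Nat.mul_le_mul u1 u2
                  _ = catalan i * catalan ((m + 1) - i) *
                      ((p + 1) * (p + i + 1) *
                        ((p + 1).ascFactorial i * (p + 1 + i).ascFactorial ((m + 1) - i))) := by
                      ring_nf
                  _ = catalan i * catalan ((m + 1) - i) *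
                      ((p + 1) * (p + i + 1) * (p + 1).ascFactorial (m + 1)) := by
                      rw [← asc_add, Nat.add_sub_cancel' hi']
                  _ ≤ catalan i * catalan ((m + 1) - i) *
                      ((p + 1) * (p + m + 2) * (p + 1).ascFactorial (m + 1)) := by
                      apply Nat.mul_le_mul_left
                      apply Nat.mul_le_mul_right
                      apply Nat.mul_le_mul_left
                      omega
            _ = (∑ i ∈ range (m + 2), catalan i * catalan ((m + 1) - i)) *
                  ((p + 1) * (p + m + 2) * (p + 1).ascFactorial (m + 1)) := by
                rw [Finset.sum_mul]
            _ = catalan (m + 2) * ((p + 1) * (p + 1).ascFactorial (m + 2)) := by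
                rw [catalan_sum (m + 1)]
                have : (p + 1).ascFactorial (m + 2) = (p + 1 + (m + 1)) * (p + 1).ascFactorial (m + 1) :=
                  Nat.ascFactorial_succ
                rw [this]; ring
  intro n _
  have h := key n 0
  rw [Nat.one_ascFactorial] at h
  simpa using h
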